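/- Let 𝔽 have characteristic 2 and V = 𝔽⁴ with basis e₁,…,e₄ and dual basis f₁,…,f₄. In H̃₃(𝔽) with the voltage assignment ℓ(v₁⊗h₁, v₂⊗h₂) = h₁(v₁)⁻¹h₂(v₂)⁻¹(v₁∧v₂)(h₁∧h₂)^φ, for any λ ∈ 𝔽 the quadrangle (e₁ ⊗ f₁), (e₃ ⊗ f₃), (e₁ ⊗ (f₁+f₄)), ((e₃+λe₂) ⊗ f₃) is a 4-cycle whose voltage equals λ·(e₁ ∧ e₂)² ∈ S₂(Λ²V). -/

import Mathlib

open Module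

set_option synthInstance.maxHeartbeats 1000000
set_option maxHeartbeats 1000000

/-- The wedge `v ∧ w` as an element of the second exterior power `⋀[𝔽]^2 V`. -/
noncomputable def wedge2 (𝔽 : Type*) {V : Type*} [Field 𝔽] [AddCommGroup V] [Module 𝔽 V]
    (v w : V) : ⋀[𝔽]^2 V :=
  ⟨ExteriorAlgebra.ιMulti 𝔽 2 ![v, w],
   ExteriorAlgebra.ιMulti_range 𝔽 2 (Set.mem_range_self _)⟩

/-- The wedge `v₁ ∧ v₂ ∧ v₃ ∧ v₄` as an element of the fourth exterior power `⋀[𝔽]^4 V`. -/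
noncomputable def wedge4 (𝔽 : Type*) {V : Type*} [Field 𝔽] [AddCommGroup V] [Module 𝔽 V]
    (v₁ v₂ v₃ v₄ : V) : ⋀[𝔽]^4 V :=
  ⟨ExteriorAlgebra.ιMulti 𝔽 4 ![v₁, v₂, v₃, v₄],
   ExteriorAlgebra.ιMulti_range 𝔽 4 (Set.mem_range_self _)⟩

/-- The wedge product `⋀[𝔽]^2 V × ⋀[𝔽]^2 V → ⋀[𝔽]^4 V`. -/
noncomputable def wmul {𝔽 V : Type*} [Field 𝔽] [AddCommGroup V] [Module 𝔽 V]
    (a b : ⋀[𝔽]^2 V) : ⋀[𝔽]^4 V :=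
  ⟨a.1 * b.1, by
    have h : (⋀[𝔽]^4 V) = ⋀[𝔽]^2 V * ⋀[𝔽]^2 V := by
      rw [show (4 : ℕ) = 2 + 2 by norm_num]
      exact pow_add _ 2 2
    exact h ▸ Submodule.mul_mem_mul a.2 b.2⟩

/-- The relation submodule defining the symmetric square. -/
def symRel (𝔽 W : Type*) [Field 𝔽] [AddCommGroup W] [Module 𝔽 W] :
    Submodule 𝔽 (TensorProduct 𝔽 W W) :=
  Submodule.span 𝔽 {x | ∃ v w : W, x = v ⊗ₜ[𝔽] w - w ⊗ₜ[𝔽] v}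

/-- The symmetric square `S₂(W) = (W ⊗ W)/⟨v⊗w − w⊗v⟩`. -/
abbrev SymSq (𝔽 W : Type*) [Field 𝔽] [AddCommGroup W] [Module 𝔽 W] :=
  TensorProduct 𝔽 W W ⧸ symRel 𝔽 W

/-- The symmetric product `vw ∈ S₂(W)`. -/
noncomputable def symMul (𝔽 : Type*) {W : Type*} [Field 𝔽] [AddCommGroup W] [Module 𝔽 W] (v w : W) :
    SymSq 𝔽 W :=
  Submodule.Quotient.mk (v ⊗ₜ[𝔽] w)

/-- The square `w² ∈ S₂(W)`. -/
noncomputable def sqS (𝔽 : Type*) {W : Type*} [Field 𝔽] [AddCommGroup W] [Module 𝔽 W] (w : W) : SymSq 𝔽 W :=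
  symMul 𝔽 w w

/-- The affine non-incident point-hyperplane graph `H̃₃(𝔽)` (for `V = 𝔽⁴`): vertices are pairs
`(v, h)` with `h v ≠ 0` (representing the simple tensor `v ⊗ h`), adjacency is mutual
annihilation. -/
def affPH (𝔽 V : Type*) [Field 𝔽] [AddCommGroup V] [Module 𝔽 V] :
    SimpleGraph {p : V × Module.Dual 𝔽 V // p.2 p.1 ≠ 0} where
  Adj a b := a.1.2 b.1.1 = 0 ∧ b.1.2 a.1.1 = 0
  symm := ⟨fun _ _ h => ⟨h.2, h.1⟩⟩
  loopless := ⟨fun a h => a.2 h.1⟩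

/-- The voltage assignment `ℓ` on `H̃₃(𝔽)`: the dart from `v₁ ⊗ h₁` to `v₂ ⊗ h₂` gets the
voltage `h₁(v₁)⁻¹ h₂(v₂)⁻¹ (v₁ ∧ v₂)(h₁ ∧ h₂)^φ ∈ S₂(Λ²V)`, where `φ` identifies `Λ²(V*)`
with `Λ²V`. -/
noncomputable def volt {𝔽 V : Type*} [Field 𝔽] [AddCommGroup V] [Module 𝔽 V]
    (φ : (⋀[𝔽]^2 (Module.Dual 𝔽 V)) →ₗ[𝔽] ⋀[𝔽]^2 V)
    (a b : {p : V × Module.Dual 𝔽 V // p.2 p.1 ≠ 0}) : SymSq 𝔽 (⋀[𝔽]^2 V) :=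
  ((a.1.2 a.1.1)⁻¹ * (b.1.2 b.1.1)⁻¹) •
    symMul 𝔽 (wedge2 𝔽 a.1.1 b.1.1) (φ (wedge2 𝔽 a.1.2 b.1.2))

section Quadrangle

variable (𝔽 : Type*) [Field 𝔽]

/-- The standard basis vector `eᵢ` of `𝔽⁴`. -/
noncomputable def e17 (i : Fin 4) : Fin 4 → 𝔽 := Pi.single i 1

/-- The dual basis vector `fᵢ`. -/
def f17 (i : Fin 4) : Module.Dual 𝔽 (Fin 4 → 𝔽) := LinearMap.proj i

/-- The vertex `e₁ ⊗ f₁` of `H̃₃(𝔽)`. -/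
noncomputable def q17_0 : {p : (Fin 4 → 𝔽) × Module.Dual 𝔽 (Fin 4 → 𝔽) // p.2 p.1 ≠ 0} :=
  ⟨(e17 𝔽 0, f17 𝔽 0), by simp [e17, f17]⟩

/-- The vertex `e₃ ⊗ f₃`. -/
noncomputable def q17_1 : {p : (Fin 4 → 𝔽) × Module.Dual 𝔽 (Fin 4 → 𝔽) // p.2 p.1 ≠ 0} :=
  ⟨(e17 𝔽 2, f17 𝔽 2), by simp [e17, f17]⟩

/-- The vertex `e₁ ⊗ (f₁ + f₄)`. -/
noncomputable def q17_2 : {p : (Fin 4 → 𝔽) × Module.Dual 𝔽 (Fin 4 → 𝔽) // p.2 p.1 ≠ 0} :=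
  ⟨(e17 𝔽 0, f17 𝔽 0 + f17 𝔽 3), by simp [e17, f17]⟩

/-- The vertex `(e₃ + λe₂) ⊗ f₃`. -/
noncomputable def q17_3 (lam : 𝔽) :
    {p : (Fin 4 → 𝔽) × Module.Dual 𝔽 (Fin 4 → 𝔽) // p.2 p.1 ≠ 0} :=
  ⟨(e17 𝔽 2 + lam • e17 𝔽 1, f17 𝔽 2), by simp [e17, f17]⟩

end Quadrangle


section Aux17
open ExteriorAlgebra
variable {𝔽 : Type*} [Field 𝔽]

lemma wedge2_val {V : Type*} [AddCommGroup V] [Module 𝔽 V] (v w : V) :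
    ((wedge2 𝔽 v w : ⋀[𝔽]^2 V) : ExteriorAlgebra 𝔽 V)
      = ExteriorAlgebra.ι 𝔽 v * ExteriorAlgebra.ι 𝔽 w := by
  simp [wedge2, ExteriorAlgebra.ιMulti_apply, List.ofFn_succ]

lemma wedge4_val {V : Type*} [AddCommGroup V] [Module 𝔽 V] (v₁ v₂ v₃ v₄ : V) :
    ((wedge4 𝔽 v₁ v₂ v₃ v₄ : ⋀[𝔽]^4 V) : ExteriorAlgebra 𝔽 V)
      = ExteriorAlgebra.ι 𝔽 v₁ * (ExteriorAlgebra.ι 𝔽 v₂ *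
          (ExteriorAlgebra.ι 𝔽 v₃ * ExteriorAlgebra.ι 𝔽 v₄)) := by
  simp [wedge4, ExteriorAlgebra.ιMulti_apply, List.ofFn_succ]

lemma addself (𝔽 : Type*) [Field 𝔽] [CharP 𝔽 2] {M : Type*} [AddCommGroup M] [Module 𝔽 M]
    (x : M) : x + x = 0 := by
  rw [← two_smul 𝔽 x, show (2:𝔽) = 0 by exact_mod_cast CharP.cast_eq_zero 𝔽 2, zero_smul]

lemma negid (𝔽 : Type*) [Field 𝔽] [CharP 𝔽 2] {M : Type*} [AddCommGroup M] [Module 𝔽 M]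
    (x : M) : -x = x := neg_eq_of_add_eq_zero_left (addself 𝔽 x)

lemma icomm [CharP 𝔽 2] {V : Type*} [AddCommGroup V] [Module 𝔽 V] (x y : V) :
    ExteriorAlgebra.ι 𝔽 x * ExteriorAlgebra.ι 𝔽 y
      = ExteriorAlgebra.ι 𝔽 y * ExteriorAlgebra.ι 𝔽 x := by
  have h := ExteriorAlgebra.ι_add_mul_swap (R := 𝔽) x y
  rw [eq_neg_of_add_eq_zero_left h, negid 𝔽]

lemma wedge2_comm [CharP 𝔽 2] {V : Type*} [AddCommGroup V] [Module 𝔽 V] (v w : V) :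
    wedge2 𝔽 w v = wedge2 𝔽 v w :=
  Subtype.ext (by rw [wedge2_val, wedge2_val, icomm])

lemma wedge2_add_left {V : Type*} [AddCommGroup V] [Module 𝔽 V] (u v w : V) :
    wedge2 𝔽 (u + v) w = wedge2 𝔽 u w + wedge2 𝔽 v w :=
  Subtype.ext (by simp [wedge2_val, add_mul])

lemma wedge2_add_right {V : Type*} [AddCommGroup V] [Module 𝔽 V] (u v w : V) :
    wedge2 𝔽 u (v + w) = wedge2 𝔽 u v + wedge2 𝔽 u w :=
  Subtype.ext (by simp [wedge2_val, mul_add])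

lemma wedge2_smul_left {V : Type*} [AddCommGroup V] [Module 𝔽 V] (c : 𝔽) (u v : V) :
    wedge2 𝔽 (c • u) v = c • wedge2 𝔽 u v :=
  Subtype.ext (by simp [wedge2_val, smul_mul_assoc])

lemma wedge2_smul_right {V : Type*} [AddCommGroup V] [Module 𝔽 V] (c : 𝔽) (u v : V) :
    wedge2 𝔽 u (c • v) = c • wedge2 𝔽 u v :=
  Subtype.ext (by simp [wedge2_val, mul_smul_comm])

lemma symMul_comm {W : Type*} [AddCommGroup W] [Module 𝔽 W] (a b : W) :
    symMul 𝔽 a b = symMul 𝔽 b a :=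
  (Submodule.Quotient.eq _).2 (Submodule.subset_span ⟨a, b, rfl⟩)

lemma symMul_add_left {W : Type*} [AddCommGroup W] [Module 𝔽 W] (a b w : W) :
    symMul 𝔽 (a + b) w = symMul 𝔽 a w + symMul 𝔽 b w := by
  simp [symMul, TensorProduct.add_tmul, ← Submodule.Quotient.mk_add]

lemma symMul_add_right {W : Type*} [AddCommGroup W] [Module 𝔽 W] (a b w : W) :
    symMul 𝔽 w (a + b) = symMul 𝔽 w a + symMul 𝔽 w b := by
  simp [symMul, TensorProduct.tmul_add, ← Submodule.Quotient.mk_add]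

lemma symMul_smul_left {W : Type*} [AddCommGroup W] [Module 𝔽 W] (c : 𝔽) (a w : W) :
    symMul 𝔽 (c • a) w = c • symMul 𝔽 a w := by
  simp [symMul, TensorProduct.smul_tmul', ← Submodule.Quotient.mk_smul]

lemma symMul_smul_right {W : Type*} [AddCommGroup W] [Module 𝔽 W] (c : 𝔽) (a w : W) :
    symMul 𝔽 w (c • a) = c • symMul 𝔽 w a := by
  simp [symMul, TensorProduct.tmul_smul, ← Submodule.Quotient.mk_smul]

noncomputable def nn (𝔽 : Type*) [Field 𝔽] (i : Fin 4) : ExteriorAlgebra 𝔽 (Fin 4 → 𝔽) :=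
  ExteriorAlgebra.ι 𝔽 (e17 𝔽 i)

lemma nn_zzp (i : Fin 4) : nn 𝔽 i * nn 𝔽 i = 0 := ExteriorAlgebra.ι_sq_zero _

lemma nn_zz (i : Fin 4) (x : ExteriorAlgebra 𝔽 (Fin 4 → 𝔽)) : nn 𝔽 i * (nn 𝔽 i * x) = 0 := by
  rw [← mul_assoc, nn_zzp, zero_mul]

lemma nn_swp [CharP 𝔽 2] (i j : Fin 4) : nn 𝔽 j * nn 𝔽 i = nn 𝔽 i * nn 𝔽 j := icomm _ _

lemma nn_sw [CharP 𝔽 2] (i j : Fin 4) (x : ExteriorAlgebra 𝔽 (Fin 4 → 𝔽)) :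
    nn 𝔽 j * (nn 𝔽 i * x) = nn 𝔽 i * (nn 𝔽 j * x) := by
  rw [← mul_assoc, nn_swp, mul_assoc]

lemma wedge2_nn (i j : Fin 4) :
    ((wedge2 𝔽 (e17 𝔽 i) (e17 𝔽 j) : ⋀[𝔽]^2 (Fin 4 → 𝔽)) : ExteriorAlgebra 𝔽 (Fin 4 → 𝔽))
      = nn 𝔽 i * nn 𝔽 j := wedge2_val _ _

lemma wedge4_nn :
    ((wedge4 𝔽 (e17 𝔽 0) (e17 𝔽 1) (e17 𝔽 2) (e17 𝔽 3) : ⋀[𝔽]^4 (Fin 4 → 𝔽)) :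
        ExteriorAlgebra 𝔽 (Fin 4 → 𝔽))
      = nn 𝔽 0 * (nn 𝔽 1 * (nn 𝔽 2 * nn 𝔽 3)) := wedge4_val _ _ _ _

lemma hrep (u : Fin 4 → 𝔽) : u = ∑ i, u i • e17 𝔽 i := by
  funext j
  simp [e17, Pi.single_apply, Finset.sum_ite_eq]

lemma span2 (x : ⋀[𝔽]^2 (Fin 4 → 𝔽)) : ∃ c : Fin 4 × Fin 4 → 𝔽,
    (x : ExteriorAlgebra 𝔽 (Fin 4 → 𝔽)) = ∑ p : Fin 4 × Fin 4, c p • (nn 𝔽 p.1 * nn 𝔽 p.2) := by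
  have hx : (x : ExteriorAlgebra 𝔽 (Fin 4 → 𝔽)) ∈
      Submodule.span 𝔽 (Set.range fun p : Fin 4 × Fin 4 => nn 𝔽 p.1 * nn 𝔽 p.2) := by
    have hle : (⋀[𝔽]^2 (Fin 4 → 𝔽)) ≤
        Submodule.span 𝔽 (Set.range fun p : Fin 4 × Fin 4 => nn 𝔽 p.1 * nn 𝔽 p.2) := by
      show LinearMap.range (ExteriorAlgebra.ι 𝔽) ^ 2 ≤ _
      rw [show (2:ℕ) = 1 + 1 from rfl, pow_add, pow_one]
      refine Submodule.mul_le.2 ?_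
      rintro m hm n hn
      obtain ⟨u, rfl⟩ := hm
      obtain ⟨v, rfl⟩ := hn
      have hu : ExteriorAlgebra.ι 𝔽 u = ∑ i, u i • nn 𝔽 i := by
        conv_lhs => rw [hrep u]
        simp [nn]
      have hv : ExteriorAlgebra.ι 𝔽 v = ∑ i, v i • nn 𝔽 i := by
        conv_lhs => rw [hrep v]
        simp [nn]
      rw [hu, hv, Finset.sum_mul_sum]
      refine Submodule.sum_mem _ fun i _ => Submodule.sum_mem _ fun j _ => ?_
      rw [smul_mul_smul_comm]
      exact Submodule.smul_mem _ _ (Submodule.subset_span ⟨(i, j), rfl⟩)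
    exact hle x.2
  obtain ⟨c, hc⟩ := (Submodule.mem_span_range_iff_exists_fun 𝔽).1 hx
  exact ⟨c, hc.symm⟩

end Aux17

/-- the quadrangle `(e₁⊗f₁), (e₃⊗f₃), (e₁⊗(f₁+f₄)), ((e₃+λe₂)⊗f₃)` in
`H̃₃(𝔽)` (char 𝔽 = 2) is a 4-cycle, and its voltage equals `λ·(e₁ ∧ e₂)² ∈ S₂(Λ²V)`. -/
theorem quadrangle_voltage_eq {𝔽 : Type*} [Field 𝔽] [CharP 𝔽 2]
    (χ : (⋀[𝔽]^4 (Fin 4 → 𝔽)) ≃ₗ[𝔽] 𝔽)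
    (hχ : χ (wedge4 𝔽 (e17 𝔽 0) (e17 𝔽 1) (e17 𝔽 2) (e17 𝔽 3)) = 1)
    (φ : (⋀[𝔽]^2 (Module.Dual 𝔽 (Fin 4 → 𝔽))) →ₗ[𝔽] ⋀[𝔽]^2 (Fin 4 → 𝔽))
    (hφ : ∀ (v₁ v₂ : Fin 4 → 𝔽) (f₁ f₂ : Module.Dual 𝔽 (Fin 4 → 𝔽)),
      χ (wmul (wedge2 𝔽 v₁ v₂) (φ (wedge2 𝔽 f₁ f₂))) = f₁ v₁ * f₂ v₂ - f₁ v₂ * f₂ v₁)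
    (lam : 𝔽) :
    ((affPH 𝔽 (Fin 4 → 𝔽)).Adj (q17_0 𝔽) (q17_1 𝔽) ∧
     (affPH 𝔽 (Fin 4 → 𝔽)).Adj (q17_1 𝔽) (q17_2 𝔽) ∧
     (affPH 𝔽 (Fin 4 → 𝔽)).Adj (q17_2 𝔽) (q17_3 𝔽 lam) ∧
     (affPH 𝔽 (Fin 4 → 𝔽)).Adj (q17_3 𝔽 lam) (q17_0 𝔽)) ∧
    volt φ (q17_0 𝔽) (q17_1 𝔽) + volt φ (q17_1 𝔽) (q17_2 𝔽) +
      volt φ (q17_2 𝔽) (q17_3 𝔽 lam) + volt φ (q17_3 𝔽 lam) (q17_0 𝔽) =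
      lam • sqS 𝔽 (wedge2 𝔽 (e17 𝔽 0) (e17 𝔽 1)) := by
  classical
  have negF : (-1 : 𝔽) = 1 := negid 𝔽 1
  constructor
  · refine ⟨⟨?_, ?_⟩, ⟨?_, ?_⟩, ⟨?_, ?_⟩, ⟨?_, ?_⟩⟩ <;>
      simp [affPH, q17_0, q17_1, q17_2, q17_3, e17, f17, Pi.single_apply]
  · -- voltage computation
    obtain ⟨c, hc⟩ := span2 (φ (wedge2 𝔽 (f17 𝔽 3) (f17 𝔽 2)))
    have key : ∀ (k l : Fin 4) (s : 𝔽),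
        wmul (wedge2 𝔽 (e17 𝔽 k) (e17 𝔽 l)) (φ (wedge2 𝔽 (f17 𝔽 3) (f17 𝔽 2)))
          = s • wedge4 𝔽 (e17 𝔽 0) (e17 𝔽 1) (e17 𝔽 2) (e17 𝔽 3) →
        s = (f17 𝔽 3) (e17 𝔽 k) * (f17 𝔽 2) (e17 𝔽 l)
            - (f17 𝔽 3) (e17 𝔽 l) * (f17 𝔽 2) (e17 𝔽 k) := by
      intro k l s hv
      have h := hφ (e17 𝔽 k) (e17 𝔽 l) (f17 𝔽 3) (f17 𝔽 2)
      rw [hv, map_smul, smul_eq_mul, hχ, mul_one] at h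
      exact h
    have h01 := key 2 3 (c (0,1) + c (1,0)) (by
      apply Subtype.ext
      show ((wedge2 𝔽 (e17 𝔽 2) (e17 𝔽 3) : ⋀[𝔽]^2 (Fin 4 → 𝔽)) :
          ExteriorAlgebra 𝔽 (Fin 4 → 𝔽)) * _ = _
      rw [hc, wedge2_nn, Finset.mul_sum]
      simp only [SetLike.val_smul, wedge4_nn, Fintype.sum_prod_type, Fin.sum_univ_four,
        mul_smul_comm, mul_assoc, nn_sw 0 1, nn_sw 0 2, nn_sw 0 3, nn_sw 1 2, nn_sw 1 3,
        nn_sw 2 3, nn_swp 0 1, nn_swp 0 2, nn_swp 0 3, nn_swp 1 2, nn_swp 1 3, nn_swp 2 3,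
        nn_zz 0, nn_zz 1, nn_zz 2, nn_zz 3, nn_zzp 0, nn_zzp 1, nn_zzp 2, nn_zzp 3,
        mul_zero, smul_zero, add_zero, zero_add]
      module)
    have h02 := key 1 3 (c (0,2) + c (2,0)) (by
      apply Subtype.ext
      show ((wedge2 𝔽 (e17 𝔽 1) (e17 𝔽 3) : ⋀[𝔽]^2 (Fin 4 → 𝔽)) :
          ExteriorAlgebra 𝔽 (Fin 4 → 𝔽)) * _ = _
      rw [hc, wedge2_nn, Finset.mul_sum]
      simp only [SetLike.val_smul, wedge4_nn, Fintype.sum_prod_type, Fin.sum_univ_four,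
        mul_smul_comm, mul_assoc, nn_sw 0 1, nn_sw 0 2, nn_sw 0 3, nn_sw 1 2, nn_sw 1 3,
        nn_sw 2 3, nn_swp 0 1, nn_swp 0 2, nn_swp 0 3, nn_swp 1 2, nn_swp 1 3, nn_swp 2 3,
        nn_zz 0, nn_zz 1, nn_zz 2, nn_zz 3, nn_zzp 0, nn_zzp 1, nn_zzp 2, nn_zzp 3,
        mul_zero, smul_zero, add_zero, zero_add]
      module)
    have h03 := key 1 2 (c (0,3) + c (3,0)) (by
      apply Subtype.ext
      show ((wedge2 𝔽 (e17 𝔽 1) (e17 𝔽 2) : ⋀[𝔽]^2 (Fin 4 → 𝔽)) :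
          ExteriorAlgebra 𝔽 (Fin 4 → 𝔽)) * _ = _
      rw [hc, wedge2_nn, Finset.mul_sum]
      simp only [SetLike.val_smul, wedge4_nn, Fintype.sum_prod_type, Fin.sum_univ_four,
        mul_smul_comm, mul_assoc, nn_sw 0 1, nn_sw 0 2, nn_sw 0 3, nn_sw 1 2, nn_sw 1 3,
        nn_sw 2 3, nn_swp 0 1, nn_swp 0 2, nn_swp 0 3, nn_swp 1 2, nn_swp 1 3, nn_swp 2 3,
        nn_zz 0, nn_zz 1, nn_zz 2, nn_zz 3, nn_zzp 0, nn_zzp 1, nn_zzp 2, nn_zzp 3,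
        mul_zero, smul_zero, add_zero, zero_add]
      module)
    have h12 := key 0 3 (c (1,2) + c (2,1)) (by
      apply Subtype.ext
      show ((wedge2 𝔽 (e17 𝔽 0) (e17 𝔽 3) : ⋀[𝔽]^2 (Fin 4 → 𝔽)) :
          ExteriorAlgebra 𝔽 (Fin 4 → 𝔽)) * _ = _
      rw [hc, wedge2_nn, Finset.mul_sum]
      simp only [SetLike.val_smul, wedge4_nn, Fintype.sum_prod_type, Fin.sum_univ_four,
        mul_smul_comm, mul_assoc, nn_sw 0 1, nn_sw 0 2, nn_sw 0 3, nn_sw 1 2, nn_sw 1 3,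
        nn_sw 2 3, nn_swp 0 1, nn_swp 0 2, nn_swp 0 3, nn_swp 1 2, nn_swp 1 3, nn_swp 2 3,
        nn_zz 0, nn_zz 1, nn_zz 2, nn_zz 3, nn_zzp 0, nn_zzp 1, nn_zzp 2, nn_zzp 3,
        mul_zero, smul_zero, add_zero, zero_add]
      module)
    have h13 := key 0 2 (c (1,3) + c (3,1)) (by
      apply Subtype.ext
      show ((wedge2 𝔽 (e17 𝔽 0) (e17 𝔽 2) : ⋀[𝔽]^2 (Fin 4 → 𝔽)) :
          ExteriorAlgebra 𝔽 (Fin 4 → 𝔽)) * _ = _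
      rw [hc, wedge2_nn, Finset.mul_sum]
      simp only [SetLike.val_smul, wedge4_nn, Fintype.sum_prod_type, Fin.sum_univ_four,
        mul_smul_comm, mul_assoc, nn_sw 0 1, nn_sw 0 2, nn_sw 0 3, nn_sw 1 2, nn_sw 1 3,
        nn_sw 2 3, nn_swp 0 1, nn_swp 0 2, nn_swp 0 3, nn_swp 1 2, nn_swp 1 3, nn_swp 2 3,
        nn_zz 0, nn_zz 1, nn_zz 2, nn_zz 3, nn_zzp 0, nn_zzp 1, nn_zzp 2, nn_zzp 3,
        mul_zero, smul_zero, add_zero, zero_add]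
      module)
    have h23 := key 0 1 (c (2,3) + c (3,2)) (by
      apply Subtype.ext
      show ((wedge2 𝔽 (e17 𝔽 0) (e17 𝔽 1) : ⋀[𝔽]^2 (Fin 4 → 𝔽)) :
          ExteriorAlgebra 𝔽 (Fin 4 → 𝔽)) * _ = _
      rw [hc, wedge2_nn, Finset.mul_sum]
      simp only [SetLike.val_smul, wedge4_nn, Fintype.sum_prod_type, Fin.sum_univ_four,
        mul_smul_comm, mul_assoc, nn_sw 0 1, nn_sw 0 2, nn_sw 0 3, nn_sw 1 2, nn_sw 1 3,
        nn_sw 2 3, nn_swp 0 1, nn_swp 0 2, nn_swp 0 3, nn_swp 1 2, nn_swp 1 3, nn_swp 2 3,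
        nn_zz 0, nn_zz 1, nn_zz 2, nn_zz 3, nn_zzp 0, nn_zzp 1, nn_zzp 2, nn_zzp 3,
        mul_zero, smul_zero, add_zero, zero_add]
      module)
    have e01 : c (0,1) + c (1,0) = 1 := by
      rw [h01]; simp [f17, e17, Pi.single_apply, negF]
    have e02 : c (0,2) + c (2,0) = 0 := by
      rw [h02]; simp [f17, e17, Pi.single_apply, negF]
    have e03 : c (0,3) + c (3,0) = 0 := by
      rw [h03]; simp [f17, e17, Pi.single_apply, negF]
    have e12 : c (1,2) + c (2,1) = 0 := by
      rw [h12]; simp [f17, e17, Pi.single_apply, negF]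
    have e13 : c (1,3) + c (3,1) = 0 := by
      rw [h13]; simp [f17, e17, Pi.single_apply, negF]
    have e23 : c (2,3) + c (3,2) = 0 := by
      rw [h23]; simp [f17, e17, Pi.single_apply, negF]
    have r10 : c (1,0) = 1 - c (0,1) := by linear_combination e01
    have r20 : c (2,0) = -c (0,2) := by linear_combination e02
    have r30 : c (3,0) = -c (0,3) := by linear_combination e03
    have r21 : c (2,1) = -c (1,2) := by linear_combination e12
    have r31 : c (3,1) = -c (1,3) := by linear_combination e13
    have r32 : c (3,2) = -c (2,3) := by linear_combination e23
    have hQB : φ (wedge2 𝔽 (f17 𝔽 3) (f17 𝔽 2)) = wedge2 𝔽 (e17 𝔽 0) (e17 𝔽 1) := by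
      apply Subtype.ext
      rw [hc, wedge2_nn]
      simp only [Fintype.sum_prod_type, Fin.sum_univ_four, nn_zzp 0, nn_zzp 1, nn_zzp 2,
        nn_zzp 3, nn_swp 0 1, nn_swp 0 2, nn_swp 0 3, nn_swp 1 2, nn_swp 1 3, nn_swp 2 3,
        smul_zero, add_zero, zero_add]
      rw [r10, r20, r30, r21, r31, r32]
      module
    have v1 : volt φ (q17_0 𝔽) (q17_1 𝔽)
        = symMul 𝔽 (wedge2 𝔽 (e17 𝔽 0) (e17 𝔽 2)) (φ (wedge2 𝔽 (f17 𝔽 0) (f17 𝔽 2))) := by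
      show (((f17 𝔽 0) (e17 𝔽 0))⁻¹ * ((f17 𝔽 2) (e17 𝔽 2))⁻¹) •
          symMul 𝔽 (wedge2 𝔽 (e17 𝔽 0) (e17 𝔽 2)) (φ (wedge2 𝔽 (f17 𝔽 0) (f17 𝔽 2))) = _
      rw [show ((f17 𝔽 0) (e17 𝔽 0))⁻¹ * ((f17 𝔽 2) (e17 𝔽 2))⁻¹ = 1 by
        simp [f17, e17], one_smul]
    have v2 : volt φ (q17_1 𝔽) (q17_2 𝔽)
        = symMul 𝔽 (wedge2 𝔽 (e17 𝔽 2) (e17 𝔽 0))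
            (φ (wedge2 𝔽 (f17 𝔽 2) (f17 𝔽 0 + f17 𝔽 3))) := by
      show (((f17 𝔽 2) (e17 𝔽 2))⁻¹ * ((f17 𝔽 0 + f17 𝔽 3) (e17 𝔽 0))⁻¹) •
          symMul 𝔽 (wedge2 𝔽 (e17 𝔽 2) (e17 𝔽 0))
            (φ (wedge2 𝔽 (f17 𝔽 2) (f17 𝔽 0 + f17 𝔽 3))) = _
      rw [show ((f17 𝔽 2) (e17 𝔽 2))⁻¹ * ((f17 𝔽 0 + f17 𝔽 3) (e17 𝔽 0))⁻¹ = 1 by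
        simp [f17, e17, Pi.single_apply], one_smul]
    have v3 : volt φ (q17_2 𝔽) (q17_3 𝔽 lam)
        = symMul 𝔽 (wedge2 𝔽 (e17 𝔽 0) (e17 𝔽 2 + lam • e17 𝔽 1))
            (φ (wedge2 𝔽 (f17 𝔽 0 + f17 𝔽 3) (f17 𝔽 2))) := by
      show (((f17 𝔽 0 + f17 𝔽 3) (e17 𝔽 0))⁻¹ * ((f17 𝔽 2) (e17 𝔽 2 + lam • e17 𝔽 1))⁻¹) •
          symMul 𝔽 (wedge2 𝔽 (e17 𝔽 0) (e17 𝔽 2 + lam • e17 𝔽 1))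
            (φ (wedge2 𝔽 (f17 𝔽 0 + f17 𝔽 3) (f17 𝔽 2))) = _
      rw [show ((f17 𝔽 0 + f17 𝔽 3) (e17 𝔽 0))⁻¹ *
            ((f17 𝔽 2) (e17 𝔽 2 + lam • e17 𝔽 1))⁻¹ = 1 by
        simp [f17, e17, Pi.single_apply], one_smul]
    have v4 : volt φ (q17_3 𝔽 lam) (q17_0 𝔽)
        = symMul 𝔽 (wedge2 𝔽 (e17 𝔽 2 + lam • e17 𝔽 1) (e17 𝔽 0))
            (φ (wedge2 𝔽 (f17 𝔽 2) (f17 𝔽 0))) := by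
      show (((f17 𝔽 2) (e17 𝔽 2 + lam • e17 𝔽 1))⁻¹ * ((f17 𝔽 0) (e17 𝔽 0))⁻¹) •
          symMul 𝔽 (wedge2 𝔽 (e17 𝔽 2 + lam • e17 𝔽 1) (e17 𝔽 0))
            (φ (wedge2 𝔽 (f17 𝔽 2) (f17 𝔽 0))) = _
      rw [show ((f17 𝔽 2) (e17 𝔽 2 + lam • e17 𝔽 1))⁻¹ * ((f17 𝔽 0) (e17 𝔽 0))⁻¹ = 1 by
        simp [f17, e17, Pi.single_apply], one_smul]
    rw [v1, v2, v3, v4]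
    have t2 : ∀ z : SymSq 𝔽 (⋀[𝔽]^2 (Fin 4 → 𝔽)), (2:ℕ) • z = 0 := fun z => by
      rw [two_nsmul]; exact addself 𝔽 z
    have t4 : ∀ z : SymSq 𝔽 (⋀[𝔽]^2 (Fin 4 → 𝔽)), (4:ℕ) • z = 0 := fun z => by
      have h : (4:ℕ) • z = (2:ℕ) • ((2:ℕ) • z) := by rw [smul_smul]; norm_num
      rw [h, t2]
    simp only [wedge2_add_left, wedge2_add_right, wedge2_smul_left, wedge2_smul_right,
      map_add, map_smul, symMul_add_left, symMul_add_right, symMul_smul_left,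
      symMul_smul_right, smul_add, hQB, sqS,
      wedge2_comm (e17 𝔽 0) (e17 𝔽 2), wedge2_comm (e17 𝔽 0) (e17 𝔽 1),
      wedge2_comm (f17 𝔽 0) (f17 𝔽 2), wedge2_comm (f17 𝔽 3) (f17 𝔽 2)]
    have t2z : ∀ z : SymSq 𝔽 (⋀[𝔽]^2 (Fin 4 → 𝔽)), (2:ℤ) • z = 0 := fun z => by
      rw [two_zsmul]; exact addself 𝔽 z
    have t4z : ∀ z : SymSq 𝔽 (⋀[𝔽]^2 (Fin 4 → 𝔽)), (4:ℤ) • z = 0 := fun z => by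
      have h : (4:ℤ) • z = (2:ℤ) • ((2:ℤ) • z) := by rw [smul_smul]; norm_num
      rw [h, t2z]
    abel_nf
    simp only [t2, t4, t2z, t4z, zero_add, add_zero]
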